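/- arXiv:2401.07494 — 4 statements merged into one kernel-verified Lean document; each statement's English description precedes it below -/
import Mathlib

section
/- Let A be an m×n real matrix with largest singular value (spectral norm) at most 1. Let B be the matrix obtained from A by replacing every negative entry with 0. Then the spectral norm of B is at most √(rank A). -/
open Matrix
open scoped Matrix.Norms.L2Operator

noncomputable def matSpectralNorm {m n : ℕ} (A : Matrix (Fin m) (Fin n) ℝ) : ℝ :=
  ‖LinearMap.toContinuousLinearMap (Matrix.toEuclideanLin A)‖

lemma spectralNorm_eq {m n : ℕ} (A : Matrix (Fin m) (Fin n) ℝ) : matSpectralNorm A = ‖A‖ := rfl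

-- op norm ≤ sqrt of sum of squares
lemma opnorm_le_sqrt {m n : ℕ} (M : Matrix (Fin m) (Fin n) ℝ) :
    ‖M‖ ≤ Real.sqrt (∑ i, ∑ j, M i j ^ 2) := by
  rw [Matrix.l2_opNorm_def]
  refine ContinuousLinearMap.opNorm_le_bound _ (Real.sqrt_nonneg _) fun x => ?_
  have hx : ‖x‖ = Real.sqrt (∑ j, x j ^ 2) := by
    rw [EuclideanSpace.norm_eq]; simp [Real.norm_eq_abs, sq_abs]
  have happ : ∀ i, (Matrix.toEuclideanLin M x) i = ∑ j, M i j * x j := by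
    intro i
    simp [Matrix.toEuclideanLin_apply, Matrix.mulVec, dotProduct]
  rw [EuclideanSpace.norm_eq, hx, ← Real.sqrt_mul (by positivity)]
  apply Real.sqrt_le_sqrt
  calc ∑ i, ‖(Matrix.toEuclideanLin M x) i‖ ^ 2
      = ∑ i, (∑ j, M i j * x j) ^ 2 := by simp [happ, Real.norm_eq_abs, sq_abs]
    _ ≤ ∑ i, (∑ j, M i j ^ 2) * (∑ j, x j ^ 2) := by
        refine Finset.sum_le_sum fun i _ => ?_
        exact Finset.sum_mul_sq_le_sq_mul_sq _ _ _
    _ = (∑ i, ∑ j, M i j ^ 2) * (∑ j, x j ^ 2) := by rw [← Finset.sum_mul]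

-- sum of squares equals trace of Aᵀ * A
lemma sum_sq_eq_trace {m n : ℕ} (A : Matrix (Fin m) (Fin n) ℝ) :
    ∑ i, ∑ j, A i j ^ 2 = (Aᴴ * A).trace := by
  simp [Matrix.trace, Matrix.mul_apply, Matrix.diag, sq]
  rw [Finset.sum_comm]

-- trace of a hermitian matrix equals sum of eigenvalues
lemma trace_eq_sum_eigs {n : ℕ} {H : Matrix (Fin n) (Fin n) ℝ} (hH : H.IsHermitian) :
    H.trace = ∑ i, hH.eigenvalues i := by
  conv_lhs => rw [hH.spectral_theorem]
  rw [Unitary.conjStarAlgAut_apply, Matrix.trace_mul_cycle]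
  have : (star (hH.eigenvectorUnitary : Matrix (Fin n) (Fin n) ℝ)) *
      (hH.eigenvectorUnitary : Matrix (Fin n) (Fin n) ℝ) = 1 :=
    Unitary.star_mul_self_of_mem hH.eigenvectorUnitary.2
  rw [this, one_mul, Matrix.trace_diagonal]
  simp

-- each eigenvalue is bounded in absolute value by the operator norm
lemma eig_le_norm {n : ℕ} {H : Matrix (Fin n) (Fin n) ℝ} (hH : H.IsHermitian) (i : Fin n) :
    |hH.eigenvalues i| ≤ ‖H‖ := by
  have hv := hH.mulVec_eigenvectorBasis i
  have hnorm : ‖hH.eigenvectorBasis i‖ = 1 := hH.eigenvectorBasis.orthonormal.1 i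
  have h1 := (LinearMap.toContinuousLinearMap (Matrix.toEuclideanLin H)).le_opNorm
    (hH.eigenvectorBasis i)
  have h4 : LinearMap.toContinuousLinearMap (Matrix.toEuclideanLin H) (hH.eigenvectorBasis i)
      = hH.eigenvalues i • hH.eigenvectorBasis i := by
    show Matrix.toEuclideanLin H (hH.eigenvectorBasis i) = _
    apply PiLp.ext
    intro j
    exact congrFun hv j
  rw [h4, norm_smul, hnorm] at h1
  calc |hH.eigenvalues i| = ‖hH.eigenvalues i‖ * 1 := by rw [Real.norm_eq_abs, mul_one]
    _ ≤ ‖LinearMap.toContinuousLinearMap (Matrix.toEuclideanLin H)‖ * 1 := h1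
    _ = ‖H‖ := by rw [mul_one]; exact (Matrix.l2_opNorm_def H).symm

theorem stmt_0 {m n : ℕ} (A : Matrix (Fin m) (Fin n) ℝ)
    (hA : matSpectralNorm A ≤ 1)
    (B : Matrix (Fin m) (Fin n) ℝ)
    (hB : ∀ i j, B i j = max (A i j) 0) :
    matSpectralNorm B ≤ Real.sqrt (A.rank) := by
  classical
  rw [spectralNorm_eq] at hA ⊢
  have hH : (Aᴴ * A).IsHermitian := (Matrix.posSemidef_conjTranspose_mul_self A).isHermitian
  have hnn : ∀ i, 0 ≤ hH.eigenvalues i := fun i =>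
    (Matrix.posSemidef_conjTranspose_mul_self A).eigenvalues_nonneg i
  have hnormH : ‖Aᴴ * A‖ ≤ 1 := by
    rw [Matrix.l2_opNorm_conjTranspose_mul_self]
    calc ‖A‖ * ‖A‖ ≤ 1 * 1 := mul_le_mul hA hA (norm_nonneg _) zero_le_one
      _ = 1 := one_mul 1
  have hsum : ∑ i, hH.eigenvalues i ≤ (A.rank : ℝ) := by
    have hr : A.rank = (Finset.univ.filter fun i => hH.eigenvalues i ≠ 0).card := by
      rw [← Matrix.rank_conjTranspose_mul_self A, hH.rank_eq_card_non_zero_eigs,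
        Fintype.card_subtype]
    rw [← Finset.sum_filter_ne_zero Finset.univ]
    calc ∑ i ∈ Finset.univ.filter fun i => hH.eigenvalues i ≠ 0, hH.eigenvalues i
        ≤ ∑ _i ∈ Finset.univ.filter fun i => hH.eigenvalues i ≠ 0, (1 : ℝ) :=
          Finset.sum_le_sum fun i _ =>
            le_trans (le_abs_self _) (le_trans (eig_le_norm hH i) hnormH)
      _ = ((Finset.univ.filter fun i => hH.eigenvalues i ≠ 0).card : ℝ) := by simp
      _ = (A.rank : ℝ) := by rw [hr]
  calc ‖B‖ ≤ Real.sqrt (∑ i, ∑ j, B i j ^ 2) := opnorm_le_sqrt B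
    _ ≤ Real.sqrt (∑ i, ∑ j, A i j ^ 2) := by
        apply Real.sqrt_le_sqrt
        refine Finset.sum_le_sum fun i _ => Finset.sum_le_sum fun j _ => ?_
        rw [hB]
        rcases le_or_gt (A i j) 0 with h | h
        · rw [max_eq_right h]; simpa using sq_nonneg (A i j)
        · rw [max_eq_left h.le]
    _ = Real.sqrt ((Aᴴ * A).trace) := by rw [sum_sq_eq_trace]
    _ = Real.sqrt (∑ i, hH.eigenvalues i) := by rw [trace_eq_sum_eigs hH]
    _ ≤ Real.sqrt (A.rank) := Real.sqrt_le_sqrt hsum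
end

section
/- Let A be an m×n real matrix with largest singular value at most 1. Let B be the matrix obtained from A by replacing every negative entry with 0. Then the spectral norm of B is at most √(min(m,n)). -/
open Finset Matrix

lemma spectralNorm_nonneg' {m n : ℕ} (M : Matrix (Fin m) (Fin n) ℝ) : 0 ≤ matSpectralNorm M :=
  norm_nonneg _

/-- Spectral norm is bounded by the Frobenius norm. -/
lemma spectralNorm_le_frob {m n : ℕ} (M : Matrix (Fin m) (Fin n) ℝ) :
    matSpectralNorm M ≤ Real.sqrt (∑ i, ∑ j, (M i j) ^ 2) := by
  apply ContinuousLinearMap.opNorm_le_bound _ (Real.sqrt_nonneg _)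
  intro x
  rw [EuclideanSpace.norm_eq, EuclideanSpace.norm_eq]
  have hx : ∀ j, x j = (WithLp.equiv 2 (Fin n → ℝ) x) j := fun _ => rfl
  calc Real.sqrt (∑ i, ‖(LinearMap.toContinuousLinearMap (Matrix.toEuclideanLin M)) x i‖ ^ 2)
      ≤ Real.sqrt ((∑ i, ∑ j, (M i j) ^ 2) * ∑ j, ‖x j‖ ^ 2) := by
        apply Real.sqrt_le_sqrt
        rw [Finset.sum_mul]
        apply Finset.sum_le_sum
        intro i _
        have : (LinearMap.toContinuousLinearMap (Matrix.toEuclideanLin M)) x i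
            = ∑ j, M i j * x j := rfl
        rw [this]
        calc ‖∑ j, M i j * x j‖ ^ 2 = (∑ j, M i j * x j) ^ 2 := by
              rw [Real.norm_eq_abs, sq_abs]
          _ ≤ (∑ j, (M i j) ^ 2) * ∑ j, (x j) ^ 2 :=
              Finset.sum_mul_sq_le_sq_mul_sq _ _ _
          _ = (∑ j, (M i j) ^ 2) * ∑ j, ‖x j‖ ^ 2 := by
              simp [Real.norm_eq_abs, sq_abs]
    _ = Real.sqrt (∑ i, ∑ j, (M i j) ^ 2) * Real.sqrt (∑ j, ‖x j‖ ^ 2) :=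
        Real.sqrt_mul (by positivity) _

/-- Each column has ℓ² norm at most the spectral norm. -/
lemma col_sq_le {m n : ℕ} (M : Matrix (Fin m) (Fin n) ℝ) (j : Fin n) :
    ∑ i, (M i j) ^ 2 ≤ (matSpectralNorm M) ^ 2 := by
  set T := LinearMap.toContinuousLinearMap (Matrix.toEuclideanLin M)
  have h := T.le_opNorm (EuclideanSpace.single j (1 : ℝ))
  rw [EuclideanSpace.norm_single, norm_one, mul_one] at h
  have hT : T (EuclideanSpace.single j 1) = (WithLp.equiv 2 (Fin m → ℝ)).symm
      (fun i => M i j) := by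
    ext i
    show (M *ᵥ Pi.single j 1) i = M i j
    simp
  rw [hT] at h
  have hnorm : ‖(WithLp.equiv 2 (Fin m → ℝ)).symm (fun i => M i j)‖
      = Real.sqrt (∑ i, (M i j) ^ 2) := by
    rw [EuclideanSpace.norm_eq]
    simp [Real.norm_eq_abs, sq_abs]
  rw [hnorm] at h
  calc ∑ i, (M i j) ^ 2 = Real.sqrt (∑ i, (M i j) ^ 2) ^ 2 := by
        rw [Real.sq_sqrt (by positivity)]
    _ ≤ (matSpectralNorm M) ^ 2 := by
        apply pow_le_pow_left₀ (Real.sqrt_nonneg _) h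

/-- Each row has ℓ² norm at most the spectral norm. -/
lemma row_sq_le {m n : ℕ} (M : Matrix (Fin m) (Fin n) ℝ) (i : Fin m) :
    ∑ j, (M i j) ^ 2 ≤ (matSpectralNorm M) ^ 2 := by
  set T := LinearMap.toContinuousLinearMap (Matrix.toEuclideanLin M)
  set S : ℝ := ∑ j, (M i j) ^ 2 with hS
  have hS0 : 0 ≤ S := by positivity
  set x : EuclideanSpace ℝ (Fin n) := (WithLp.equiv 2 (Fin n → ℝ)).symm (fun j => M i j)
  have hxnorm : ‖x‖ = Real.sqrt S := by
    rw [EuclideanSpace.norm_eq]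
    simp [x, hS, Real.norm_eq_abs, sq_abs]
  have hTx : (T x) i = S := by
    show (M *ᵥ fun j => M i j) i = S
    simp [Matrix.mulVec, dotProduct, hS, sq]
  have habs : |(T x) i| ≤ ‖T x‖ := by
    rw [EuclideanSpace.norm_eq]
    calc |(T x) i| = Real.sqrt (((T x) i) ^ 2) := by rw [Real.sqrt_sq_eq_abs]
      _ ≤ Real.sqrt (∑ k, ‖(T x) k‖ ^ 2) := by
          apply Real.sqrt_le_sqrt
          exact Finset.single_le_sum (f := fun k => ‖(T x) k‖ ^ 2)
            (fun k _ => by positivity) (Finset.mem_univ i) |>.trans_eq' (by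
              rw [Real.norm_eq_abs, sq_abs])
  have key : S ≤ matSpectralNorm M * Real.sqrt S := by
    calc S = |(T x) i| := by rw [hTx, abs_of_nonneg hS0]
      _ ≤ ‖T x‖ := habs
      _ ≤ ‖T‖ * ‖x‖ := T.le_opNorm x
      _ = matSpectralNorm M * Real.sqrt S := by rw [hxnorm]; rfl
  rcases eq_or_lt_of_le (Real.sqrt_nonneg S) with h0 | h0
  · have : S = 0 := by
      have := Real.sqrt_eq_zero hS0 |>.mp h0.symm
      exact this
    rw [this]; positivity
  · have hsqrt : Real.sqrt S ≤ matSpectralNorm M := by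
      have : Real.sqrt S * Real.sqrt S ≤ matSpectralNorm M * Real.sqrt S := by
        rwa [Real.mul_self_sqrt hS0]
      exact le_of_mul_le_mul_right this h0
    calc S = Real.sqrt S ^ 2 := by rw [Real.sq_sqrt hS0]
      _ ≤ (matSpectralNorm M) ^ 2 := pow_le_pow_left₀ (Real.sqrt_nonneg _) hsqrt 2

theorem stmt_1 {m n : ℕ} (A : Matrix (Fin m) (Fin n) ℝ)
    (hA : matSpectralNorm A ≤ 1)
    (B : Matrix (Fin m) (Fin n) ℝ)
    (hB : ∀ i j, B i j = max (A i j) 0) :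
    matSpectralNorm B ≤ Real.sqrt (min m n) := by
  have hA2 : (matSpectralNorm A) ^ 2 ≤ 1 := by
    nlinarith [spectralNorm_nonneg' A]
  have hBA : ∀ i j, (B i j) ^ 2 ≤ (A i j) ^ 2 := by
    intro i j
    rw [hB i j]
    rcases le_or_gt (A i j) 0 with h | h
    · rw [max_eq_right h]; simpa using sq_nonneg (A i j)
    · rw [max_eq_left h.le]
  have hfrobB : ∑ i, ∑ j, (B i j) ^ 2 ≤ ∑ i, ∑ j, (A i j) ^ 2 :=
    Finset.sum_le_sum fun i _ => Finset.sum_le_sum fun j _ => hBA i j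
  have hrow : ∑ i, ∑ j, (A i j) ^ 2 ≤ (m : ℝ) := by
    calc ∑ i, ∑ j, (A i j) ^ 2 ≤ ∑ _i : Fin m, (1 : ℝ) :=
          Finset.sum_le_sum fun i _ => (row_sq_le A i).trans hA2
      _ = m := by simp
  have hcol : ∑ i, ∑ j, (A i j) ^ 2 ≤ (n : ℝ) := by
    rw [Finset.sum_comm]
    calc ∑ j, ∑ i, (A i j) ^ 2 ≤ ∑ _j : Fin n, (1 : ℝ) :=
          Finset.sum_le_sum fun j _ => (col_sq_le A j).trans hA2
      _ = n := by simp
  calc matSpectralNorm B ≤ Real.sqrt (∑ i, ∑ j, (B i j) ^ 2) := spectralNorm_le_frob B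
    _ ≤ Real.sqrt (min m n) := by
        apply Real.sqrt_le_sqrt
        exact le_min (hfrobB.trans hrow) (hfrobB.trans hcol)
end

section
/- Consider a one-layer recurrent map h_t = ReLU(Wˣ x_t + Wʰ h_{t−1} + b) over T time steps with h₀ fixed, where Wˣ, Wʰ have nonnegative entries. Then for each t and each coordinate i, the map (x₁, …, x_T) ↦ (h_t)ᵢ is convex as a function of the concatenated input sequence. -/
/-- Hidden states of a one-layer ReLU recurrent network:
`h 0 = h₀`, `h (t+1) i = ReLU ((Wˣ x_{t+1})ᵢ + (Wʰ h_t)ᵢ + bᵢ)`. -/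
def rnnHidden {m n : ℕ} (Wx : Matrix (Fin m) (Fin n) ℝ) (Wh : Matrix (Fin m) (Fin m) ℝ)
    (b h0 : Fin m → ℝ) (x : ℕ → Fin n → ℝ) : ℕ → Fin m → ℝ
  | 0 => h0
  | t + 1 => fun i =>
      max ((∑ j, Wx i j * x (t + 1) j) + (∑ j, Wh i j * rnnHidden Wx Wh b h0 x t j) + b i) 0

private lemma convexOn_finset_sum {ι E : Type*} [AddCommGroup E] [Module ℝ E]
    (s : Finset ι) (f : ι → E → ℝ) (hf : ∀ i ∈ s, ConvexOn ℝ Set.univ (f i)) :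
    ConvexOn ℝ Set.univ (fun x => ∑ i ∈ s, f i x) := by
  classical
  induction s using Finset.induction with
  | empty => simpa using convexOn_const (0 : ℝ) convex_univ
  | insert _ _ hij ih =>
    simp only [Finset.sum_insert hij]
    exact (hf _ (Finset.mem_insert_self _ _)).add
      (ih fun i hi => hf i (Finset.mem_insert_of_mem hi))

theorem stmt_14 {m n : ℕ} (Wx : Matrix (Fin m) (Fin n) ℝ) (Wh : Matrix (Fin m) (Fin m) ℝ)
    (b h0 : Fin m → ℝ)
    (hWx : ∀ i j, 0 ≤ Wx i j) (hWh : ∀ i j, 0 ≤ Wh i j) :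
    ∀ (t : ℕ) (i : Fin m),
      ConvexOn ℝ Set.univ (fun x : ℕ → Fin n → ℝ => rnnHidden Wx Wh b h0 x t i) := by
  intro t
  induction t with
  | zero => intro i; exact convexOn_const _ convex_univ
  | succ t ih =>
    intro i
    have h1 : ConvexOn ℝ Set.univ
        (fun x : ℕ → Fin n → ℝ => ∑ j, Wx i j * x (t + 1) j) := by
      have : IsLinearMap ℝ (fun x : ℕ → Fin n → ℝ => ∑ j, Wx i j * x (t + 1) j) := by
        constructor
        · intro a b; simp [mul_add, Finset.sum_add_distrib]
        · intro c a; simp [Finset.mul_sum, mul_left_comm]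
      exact (this.mk' _).convexOn convex_univ
    have h2 : ConvexOn ℝ Set.univ
        (fun x : ℕ → Fin n → ℝ => ∑ j, Wh i j * rnnHidden Wx Wh b h0 x t j) := by
      refine convexOn_finset_sum _ _ fun j _ => ?_
      simpa [smul_eq_mul] using (ih j).smul (hWh i j)
    have h3 := ((h1.add h2).add (convexOn_const (b i) convex_univ)).sup
      (convexOn_const (0 : ℝ) convex_univ)
    simpa [rnnHidden, Pi.sup_def] using h3
end

section
/- The softmax function from ℝⁿ to ℝⁿ, defined by softmax(x)ᵢ = exp(xᵢ)/Σⱼ exp(xⱼ), is Lipschitz continuous with Lipschitz constant at most 1 with respect to the Euclidean norm. -/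
open Finset

variable {n : ℕ}

noncomputable def sm (y : Fin n → ℝ) : Fin n → ℝ :=
  fun i => Real.exp (y i) / ∑ j, Real.exp (y j)

noncomputable def smDeriv (y : Fin n → ℝ) : (Fin n → ℝ) →L[ℝ] (Fin n → ℝ) :=
  .pi fun i => sm y i •
    (ContinuousLinearMap.proj i - ∑ j, sm y j • ContinuousLinearMap.proj (R := ℝ) (φ := fun _ : Fin n => ℝ) j)

lemma sm_hasFDerivAt [NeZero n] (y : Fin n → ℝ) : HasFDerivAt sm (smDeriv y) y := by
  have hS : (0:ℝ) < ∑ j, Real.exp (y j) :=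
    Finset.sum_pos (fun j _ => Real.exp_pos _) ⟨⟨0, Nat.pos_of_ne_zero (NeZero.ne n)⟩, mem_univ _⟩
  apply hasFDerivAt_pi''
  intro i
  have hnum : HasFDerivAt (fun y : Fin n → ℝ => Real.exp (y i))
      (Real.exp (y i) • ContinuousLinearMap.proj i) y :=
    (hasFDerivAt_apply i y).exp
  have hden : HasFDerivAt (fun y : Fin n → ℝ => ∑ j, Real.exp (y j))
      (∑ j, Real.exp (y j) • ContinuousLinearMap.proj (R := ℝ) (φ := fun _ : Fin n => ℝ) j) y :=
    HasFDerivAt.fun_sum fun j _ => (hasFDerivAt_apply j y).exp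
  have hinv : HasFDerivAt (fun y : Fin n → ℝ => (∑ j, Real.exp (y j))⁻¹)
      ((-((∑ j, Real.exp (y j)) ^ 2)⁻¹) •
        (∑ j, Real.exp (y j) • ContinuousLinearMap.proj (R := ℝ) (φ := fun _ : Fin n => ℝ) j)) y :=
    (hasDerivAt_inv hS.ne').comp_hasFDerivAt y hden
  have h := hnum.fun_mul hinv
  have heq : (fun y : Fin n → ℝ => sm y i) =
      fun y : Fin n → ℝ => Real.exp (y i) * (∑ j, Real.exp (y j))⁻¹ := by
    funext z; simp [sm, div_eq_mul_inv]
  rw [heq]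
  refine h.congr_fderiv ?_
  refine ContinuousLinearMap.ext fun v => ?_
  simp only [ContinuousLinearMap.coe_comp', Function.comp_apply, ContinuousLinearMap.proj_apply,
    ContinuousLinearMap.pi_apply, ContinuousLinearMap.add_apply, ContinuousLinearMap.smul_apply,
    ContinuousLinearMap.sub_apply, ContinuousLinearMap.sum_apply, smul_eq_mul, sm, smDeriv]
  have h1 : ∑ x, (Real.exp (y x) / ∑ j, Real.exp (y j)) * v x
      = (∑ x, Real.exp (y x) * v x) / ∑ j, Real.exp (y j) := by
    rw [Finset.sum_div]; exact Finset.sum_congr rfl fun j _ => by ring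
  rw [h1]
  field_simp
  ring

lemma key (p v : Fin n → ℝ) (h0 : ∀ i, 0 ≤ p i) (h1 : ∀ i, p i ≤ 1)
    (hsum : ∑ i, p i = 1) :
    ∑ i, (p i * (v i - ∑ j, p j * v j))^2 ≤ ∑ i, (v i)^2 := by
  set s := ∑ j, p j * v j with hs
  have step1 : ∑ i, (p i * (v i - s))^2 ≤ ∑ i, p i * (v i - s)^2 :=
    Finset.sum_le_sum fun i _ => by nlinarith [mul_nonneg (mul_nonneg (h0 i) (sub_nonneg.2 (h1 i))) (sq_nonneg (v i - s))]
  have step2 : ∑ i, p i * (v i - s)^2 = (∑ i, p i * (v i)^2) - s^2 := by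
    calc ∑ i, p i * (v i - s)^2
        = ∑ i, (p i * (v i)^2 - (2*s)*(p i * v i) + s^2 * p i) :=
          Finset.sum_congr rfl fun i _ => by ring
      _ = (∑ i, p i * (v i)^2) - (2*s)*(∑ i, p i * v i) + s^2 * (∑ i, p i) := by
          rw [Finset.sum_add_distrib, Finset.sum_sub_distrib, ← Finset.mul_sum, ← Finset.mul_sum]
      _ = (∑ i, p i * (v i)^2) - s^2 := by rw [hsum, ← hs]; ring
  have step3 : ∑ i, p i * (v i)^2 ≤ ∑ i, (v i)^2 :=
    Finset.sum_le_sum fun i _ => by nlinarith [mul_nonneg (sub_nonneg.2 (h1 i)) (sq_nonneg (v i))]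
  nlinarith [sq_nonneg s]

noncomputable def softmax {n : ℕ} (x : EuclideanSpace ℝ (Fin n)) : EuclideanSpace ℝ (Fin n) :=
  WithLp.toLp 2 (fun i => Real.exp (x i) / ∑ j, Real.exp (x j))

section
variable (n)
noncomputable def ee : EuclideanSpace ℝ (Fin n) ≃L[ℝ] (Fin n → ℝ) :=
  PiLp.continuousLinearEquiv 2 ℝ (fun _ : Fin n => ℝ)
end

noncomputable def D (x : EuclideanSpace ℝ (Fin n)) :
    EuclideanSpace ℝ (Fin n) →L[ℝ] EuclideanSpace ℝ (Fin n) :=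
  ((ee n).symm.toContinuousLinearMap.comp
    ((smDeriv ((ee n) x)).comp (ee n).toContinuousLinearMap))

lemma softmax_eq : softmax (n := n) = ⇑(ee n).symm ∘ sm ∘ ⇑(ee n) := by funext x; rfl

lemma softmax_hasFDerivAt [NeZero n] (x : EuclideanSpace ℝ (Fin n)) :
    HasFDerivAt softmax (D x) x := by
  rw [softmax_eq]
  exact ((ee n).symm.toContinuousLinearMap.hasFDerivAt).comp x
    ((sm_hasFDerivAt ((ee n) x)).comp x ((ee n).toContinuousLinearMap.hasFDerivAt))

lemma D_apply (x v : EuclideanSpace ℝ (Fin n)) (i : Fin n) :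
    D x v i = sm ((ee n) x) i * (v i - ∑ j, sm ((ee n) x) j * v j) := by
  simp [D, ee, smDeriv]

lemma D_nnnorm [NeZero n] (x : EuclideanSpace ℝ (Fin n)) : ‖D x‖₊ ≤ 1 := by
  have hS : (0:ℝ) < ∑ j, Real.exp (((ee n) x) j) :=
    Finset.sum_pos (fun j _ => Real.exp_pos _)
      ⟨⟨0, Nat.pos_of_ne_zero (NeZero.ne n)⟩, mem_univ _⟩
  suffices h : ‖D x‖ ≤ 1 by exact_mod_cast h
  refine ContinuousLinearMap.opNorm_le_bound _ zero_le_one fun v => ?_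
  rw [one_mul]
  have hnorm : ‖D x v‖ ≤ ‖v‖ := by
    rw [EuclideanSpace.norm_eq, EuclideanSpace.norm_eq]
    apply Real.sqrt_le_sqrt
    simp only [Real.norm_eq_abs, sq_abs, D_apply]
    refine key (fun i => sm ((ee n) x) i) v (fun i => ?_) (fun i => ?_) ?_
    · exact div_nonneg (Real.exp_pos _).le hS.le
    · exact (div_le_one hS).2 (Finset.single_le_sum
        (f := fun j => Real.exp (((ee n) x) j)) (fun j _ => (Real.exp_pos _).le) (mem_univ i))
    · simp only [sm]; rw [← Finset.sum_div, div_self hS.ne']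
  exact hnorm

theorem stmt_18 {n : ℕ} : LipschitzWith 1 (softmax (n := n)) := by
  rcases eq_or_ne n 0 with rfl | hn
  · haveI : Subsingleton (EuclideanSpace ℝ (Fin 0)) := ⟨fun a b => by ext i; exact i.elim0⟩
    intro x y
    rw [Subsingleton.elim (softmax x) (softmax y)]
    simp
  · haveI : NeZero n := ⟨hn⟩
    apply lipschitzWith_of_nnnorm_fderiv_le (𝕜 := ℝ)
      (fun x => (softmax_hasFDerivAt x).differentiableAt)
      (fun x => by rw [(softmax_hasFDerivAt x).fderiv]; exact D_nnnorm x)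
end
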